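/- Alternating-sum positivity with exponential weights: for integers n ≥ 594 and t = ⌈(e^{1/e}-1)·n + 1.05·ln n⌉, the sum Σ_{j=0}^{t-1} C(t-1,j)·(-1)^j·(1 - e^{-(n+j+1)})/(n+j+1)² is at least (1 - e^{-√n})·Σ_{j=0}^{t-1} C(t-1,j)·(-1)^j/(n+j+1)². -/

import Mathlib

open Real Finset intervalIntegral

lemma expand19 (n m : ℕ) (r x y : ℝ) :
    (x*y)^n * (1 - r*(x*y))^m
      = ∑ j ∈ Finset.range (m+1), ((m.choose j : ℝ) * (-r)^j) * (x^(n+j) * y^(n+j)) := by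
  have h : (1:ℝ) - r*(x*y) = (-r)*(x*y) + 1 := by ring
  rw [h, add_pow, Finset.mul_sum]
  refine Finset.sum_congr rfl fun j hj => ?_
  rw [mul_pow, one_pow, pow_add, pow_add, mul_pow]
  ring

lemma inner19 (n m : ℕ) (r y : ℝ) :
    (∫ x in (0:ℝ)..1, (x*y)^n * (1 - r*(x*y))^m)
      = ∑ j ∈ Finset.range (m+1),
          ((m.choose j : ℝ) * (-r)^j / ((n:ℝ)+j+1)) * y^(n+j) := by
  simp_rw [expand19]
  rw [intervalIntegral.integral_finset_sum]
  · refine Finset.sum_congr rfl fun j hj => ?_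
    have h : ∀ x:ℝ, ((m.choose j : ℝ) * (-r)^j) * (x^(n+j) * y^(n+j))
        = (((m.choose j : ℝ) * (-r)^j) * y^(n+j)) * x^(n+j) := fun x => by ring
    simp_rw [h]
    rw [intervalIntegral.integral_const_mul, integral_pow]
    have : ((n:ℝ)+j+1) ≠ 0 := by positivity
    push_cast
    field_simp
    simp
  · intro j hj
    exact ((continuous_const.mul ((continuous_pow _).mul continuous_const))).intervalIntegrable _ _

lemma repr19 (n m : ℕ) (r : ℝ) :
    (∫ y in (0:ℝ)..1, ∫ x in (0:ℝ)..1, (x*y)^n * (1 - r*(x*y))^m)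
      = ∑ j ∈ Finset.range (m+1), (m.choose j : ℝ) * (-r)^j / ((n:ℝ)+j+1)^2 := by
  simp_rw [inner19]
  rw [intervalIntegral.integral_finset_sum]
  · refine Finset.sum_congr rfl fun j hj => ?_
    rw [intervalIntegral.integral_const_mul, integral_pow]
    have h1 : (((1:ℝ)^(n+j+1) - 0^(n+j+1))/((n+j:ℕ)+1 : ℝ)) = 1/((n:ℝ)+j+1) := by
      push_cast
      rw [one_pow, zero_pow (Nat.succ_ne_zero _)]
      norm_num
    rw [h1, div_mul_div_comm, mul_one, ← sq]
  · intro j hj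
    exact ((continuous_const.mul (continuous_pow _))).intervalIntegrable _ _

lemma contf19 (n m : ℕ) (r y : ℝ) :
    Continuous (fun x : ℝ => (x*y)^n * (1 - r*(x*y))^m) := by fun_prop

lemma integrable_inner19 (n m : ℕ) (r a b : ℝ) :
    IntervalIntegrable (fun y => ∫ x in (0:ℝ)..1, (x*y)^n * (1 - r*(x*y))^m)
      MeasureTheory.volume a b := by
  have h : (fun y => ∫ x in (0:ℝ)..1, (x*y)^n * (1 - r*(x*y))^m)
      = fun y => ∑ j ∈ Finset.range (m+1),
          ((m.choose j : ℝ) * (-r)^j / ((n:ℝ)+j+1)) * y^(n+j) := funext (inner19 n m r)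
  rw [h]
  exact (continuous_finset_sum _ fun j _ =>
    continuous_const.mul (continuous_pow _)).intervalIntegrable _ _

lemma EI_le19 (n m : ℕ) :
    (∫ y in (0:ℝ)..1, ∫ x in (0:ℝ)..1, (x*y)^n * (1 - Real.exp (-1) * (x*y))^m)
      ≤ 1/((n:ℝ)+1)^2 := by
  have he0 : (0:ℝ) ≤ Real.exp (-1) := (Real.exp_pos _).le
  have he1 : Real.exp (-1) ≤ 1 := by
    rw [Real.exp_le_one_iff]; norm_num
  have key : (∫ y in (0:ℝ)..1, ∫ x in (0:ℝ)..1, (x*y)^n * (1 - Real.exp (-1)*(x*y))^m)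
      ≤ ∫ y in (0:ℝ)..1, ∫ x in (0:ℝ)..1, (x*y)^n * (1 - (0:ℝ)*(x*y))^m := by
    apply intervalIntegral.integral_mono_on (by norm_num)
      (integrable_inner19 n m _ 0 1) (integrable_inner19 n m 0 0 1)
    intro y hy
    apply intervalIntegral.integral_mono_on (by norm_num)
      ((contf19 n m _ y).intervalIntegrable _ _) ((contf19 n m 0 y).intervalIntegrable _ _)
    intro x hx
    obtain ⟨hx0, hx1⟩ := hx
    obtain ⟨hy0, hy1⟩ := hy
    have hxy0 : 0 ≤ x*y := mul_nonneg hx0 hy0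
    have hxy1 : x*y ≤ 1 := mul_le_one₀ hx1 hy0 hy1
    have hb0 : 0 ≤ 1 - Real.exp (-1)*(x*y) := by nlinarith
    have hb1 : 1 - Real.exp (-1)*(x*y) ≤ 1 := by nlinarith
    have hpow := pow_le_one₀ hb0 hb1 (n := m)
    have hx0n : 0 ≤ (x*y)^n := pow_nonneg hxy0 n
    calc (x*y)^n * (1 - Real.exp (-1)*(x*y))^m ≤ (x*y)^n * 1 :=
          mul_le_mul_of_nonneg_left hpow hx0n
      _ = (x*y)^n * (1 - (0:ℝ)*(x*y))^m := by norm_num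
  rw [repr19 n m 0] at key
  rw [Finset.sum_eq_single 0 (by
      intro j hj hj0
      rw [neg_zero, zero_pow hj0]
      ring) (by intro h; exact absurd (Finset.mem_range.mpr (Nat.succ_pos m)) h)] at key
  simpa using key

lemma SI_ge19 (n m : ℕ) :
    (31/100:ℝ)^m * (69/100)^(n+1) / ((n:ℝ)+1)^2
      ≤ ∫ y in (0:ℝ)..1, ∫ x in (0:ℝ)..1, (x*y)^n * (1 - 1*(x*y))^m := by
  set b : ℝ := Real.sqrt (69/100) with hbdef
  have hb0 : 0 ≤ b := Real.sqrt_nonneg _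
  have hbsq : b^2 = 69/100 := Real.sq_sqrt (by norm_num)
  have hb1 : b ≤ 1 := by nlinarith
  have hinner : ∀ y ∈ Set.Icc (0:ℝ) b,
      ((31/100:ℝ)^m * (b^(n+1)/((n:ℝ)+1))) * y^n
        ≤ ∫ x in (0:ℝ)..1, (x*y)^n * (1 - 1*(x*y))^m := by
    intro y hy
    obtain ⟨hy0, hyb⟩ := hy
    have hy1 : y ≤ 1 := hyb.trans hb1
    have hsplit := intervalIntegral.integral_add_adjacent_intervals
      ((contf19 n m 1 y).intervalIntegrable (μ := MeasureTheory.volume) 0 b)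
      ((contf19 n m 1 y).intervalIntegrable (μ := MeasureTheory.volume) b 1)
    have h2 : 0 ≤ ∫ x in b..1, (x*y)^n * (1 - 1*(x*y))^m := by
      apply intervalIntegral.integral_nonneg hb1
      intro x hx
      obtain ⟨hxb, hx1⟩ := hx
      have hx0 : 0 ≤ x := hb0.trans hxb
      have hxy0 : 0 ≤ x*y := mul_nonneg hx0 hy0
      have hxy1 : x*y ≤ 1 := mul_le_one₀ hx1 hy0 hy1
      have : (0:ℝ) ≤ 1 - 1*(x*y) := by nlinarith
      positivity
    have h3 : (∫ x in (0:ℝ)..b, ((31/100:ℝ)^m * y^n) * x^n)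
        ≤ ∫ x in (0:ℝ)..b, (x*y)^n * (1 - 1*(x*y))^m := by
      apply intervalIntegral.integral_mono_on hb0
        ((continuous_const.mul (continuous_pow _)).intervalIntegrable _ _)
        ((contf19 n m 1 y).intervalIntegrable _ _)
      intro x hx
      obtain ⟨hx0, hxb⟩ := hx
      have hxy0 : 0 ≤ x*y := mul_nonneg hx0 hy0
      have hxy : x*y ≤ 69/100 := by nlinarith
      have h31 : (31/100:ℝ)^m ≤ (1 - 1*(x*y))^m :=
        pow_le_pow_left₀ (by norm_num) (by nlinarith) m
      have hrw : ((31/100:ℝ)^m * y^n) * x^n = (x*y)^n * (31/100)^m := by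
        rw [mul_pow]; ring
      show ((31/100:ℝ)^m * y^n) * x^n ≤ _
      rw [hrw]
      exact mul_le_mul_of_nonneg_left h31 (pow_nonneg hxy0 n)
    have h4 : (∫ x in (0:ℝ)..b, ((31/100:ℝ)^m * y^n) * x^n)
        = ((31/100:ℝ)^m * y^n) * (b^(n+1)/((n:ℝ)+1)) := by
      rw [intervalIntegral.integral_const_mul, integral_pow]
      rw [zero_pow (Nat.succ_ne_zero n)]
      ring
    have heq : ((31/100:ℝ)^m * (b^(n+1)/((n:ℝ)+1))) * y^n
        = ((31/100:ℝ)^m * y^n) * (b^(n+1)/((n:ℝ)+1)) := by ring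
    linarith
  have houter1 : (∫ y in (0:ℝ)..b, ((31/100:ℝ)^m * (b^(n+1)/((n:ℝ)+1))) * y^n)
      ≤ ∫ y in (0:ℝ)..b, ∫ x in (0:ℝ)..1, (x*y)^n * (1 - 1*(x*y))^m := by
    apply intervalIntegral.integral_mono_on hb0
      ((continuous_const.mul (continuous_pow _)).intervalIntegrable _ _)
      (integrable_inner19 n m 1 0 b) hinner
  have houter2 : 0 ≤ ∫ y in b..1, ∫ x in (0:ℝ)..1, (x*y)^n * (1 - 1*(x*y))^m := by
    apply intervalIntegral.integral_nonneg hb1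
    intro y hy
    obtain ⟨hyb, hy1⟩ := hy
    have hy0 : 0 ≤ y := hb0.trans hyb
    apply intervalIntegral.integral_nonneg (by norm_num)
    intro x hx
    obtain ⟨hx0, hx1⟩ := hx
    have hxy0 : 0 ≤ x*y := mul_nonneg hx0 hy0
    have hxy1 : x*y ≤ 1 := mul_le_one₀ hx1 hy0 hy1
    have : (0:ℝ) ≤ 1 - 1*(x*y) := by nlinarith
    positivity
  have hsplit2 := intervalIntegral.integral_add_adjacent_intervals
    (integrable_inner19 n m 1 0 b) (integrable_inner19 n m 1 b 1)
  have hval : (∫ y in (0:ℝ)..b, ((31/100:ℝ)^m * (b^(n+1)/((n:ℝ)+1))) * y^n)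
      = ((31/100:ℝ)^m * (b^(n+1)/((n:ℝ)+1))) * (b^(n+1)/((n:ℝ)+1)) := by
    rw [intervalIntegral.integral_const_mul, integral_pow]
    rw [zero_pow (Nat.succ_ne_zero n)]
    ring
  have hbpow : (b^(n+1))^2 = (69/100:ℝ)^(n+1) := by
    rw [← pow_mul, mul_comm (n+1) 2, pow_mul, hbsq]
  have hfin : ((31/100:ℝ)^m * (b^(n+1)/((n:ℝ)+1))) * (b^(n+1)/((n:ℝ)+1))
      = (31/100:ℝ)^m * (69/100)^(n+1) / ((n:ℝ)+1)^2 := by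
    rw [mul_assoc, div_mul_div_comm, ← sq, ← sq, hbpow]
    ring
  linarith

lemma numeric19 (n m : ℕ) (hn : 594 ≤ n)
    (hm : (m:ℝ) ≤ (44491/100000)*n + 1.05*Real.log n) :
    Real.exp (-((n:ℝ)+1)) ≤ Real.exp (-Real.sqrt n) * ((31/100:ℝ)^m * (69/100)^(n+1)) := by
  have hn0 : (0:ℝ) ≤ n := by positivity
  have hnR : (594:ℝ) ≤ n := by exact_mod_cast hn
  set s := Real.sqrt (n:ℝ) with hsdef
  have hss : s*s = n := Real.mul_self_sqrt hn0
  have hs0 : 0 ≤ s := Real.sqrt_nonneg _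
  have h24 : 24 ≤ s := by nlinarith
  have hs24 : 24*s ≤ n := by nlinarith
  have hlog : Real.log n ≤ (5/6)*s := by
    have h1 : Real.log n = 2 * Real.log s := by
      rw [hsdef, Real.log_sqrt hn0]; ring
    have hsq : Real.sqrt s * Real.sqrt s = s := Real.mul_self_sqrt hs0
    have hsq0 : 0 ≤ Real.sqrt s := Real.sqrt_nonneg _
    have h2 : Real.log s = 2 * Real.log (Real.sqrt s) := by
      rw [Real.log_sqrt hs0]; ring
    have h3 : Real.log (Real.sqrt s) ≤ Real.sqrt s - 1 :=
      Real.log_le_sub_one_of_pos (by nlinarith)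
    have h48 : (24:ℝ)/5 ≤ Real.sqrt s := by nlinarith
    nlinarith
  have e1 : (100/31:ℝ) ≤ Real.exp (59/50) := by
    have h := Real.quadratic_le_exp_of_nonneg (show (0:ℝ) ≤ 9/50 by norm_num)
    have h2 := Real.exp_one_gt_d9
    have h3 : Real.exp (59/50) = Real.exp 1 * Real.exp (9/50) := by
      rw [← Real.exp_add]; norm_num
    nlinarith [Real.exp_pos (9/50:ℝ)]
  have e2 : (100/69:ℝ) ≤ Real.exp (77/200) := by
    have h := Real.quadratic_le_exp_of_nonneg (show (0:ℝ) ≤ 77/200 by norm_num)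
    nlinarith
  have i1 : Real.exp (-(59/50)) ≤ 31/100 := by
    rw [Real.exp_neg, inv_eq_one_div, div_le_iff₀ (Real.exp_pos _)]
    nlinarith
  have i2 : Real.exp (-(77/200)) ≤ 69/100 := by
    rw [Real.exp_neg, inv_eq_one_div, div_le_iff₀ (Real.exp_pos _)]
    nlinarith
  have p1 : Real.exp ((m:ℝ)*(-(59/50))) ≤ (31/100:ℝ)^m := by
    rw [Real.exp_nat_mul]
    exact pow_le_pow_left₀ (Real.exp_pos _).le i1 m
  have p2 : Real.exp (((n:ℕ)+1:ℕ)*(-(77/200):ℝ)) ≤ (69/100:ℝ)^(n+1) := by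
    rw [Real.exp_nat_mul]
    exact pow_le_pow_left₀ (Real.exp_pos _).le i2 (n+1)
  have hchain : Real.exp (-((n:ℝ)+1))
      ≤ Real.exp (-s) * (Real.exp ((m:ℝ)*(-(59/50))) * Real.exp (((n:ℕ)+1:ℕ)*(-(77/200):ℝ))) := by
    rw [← Real.exp_add, ← Real.exp_add]
    apply Real.exp_le_exp.mpr
    push_cast
    nlinarith
  calc Real.exp (-((n:ℝ)+1))
      ≤ Real.exp (-s) * (Real.exp ((m:ℝ)*(-(59/50))) * Real.exp (((n:ℕ)+1:ℕ)*(-(77/200):ℝ))) :=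
        hchain
    _ ≤ Real.exp (-s) * ((31/100:ℝ)^m * (69/100)^(n+1)) := by
        apply mul_le_mul_of_nonneg_left _ (Real.exp_pos _).le
        exact mul_le_mul p1 p2 (Real.exp_pos _).le (pow_nonneg (by norm_num) m)

lemma hexp19 : Real.exp (1/Real.exp 1) ≤ 1.44491 := by
  have hinv : 1/Real.exp 1 ≤ 0.368 := by
    rw [div_le_iff₀ (Real.exp_pos 1)]
    nlinarith [Real.exp_one_gt_d9]
  have h1 : Real.exp (1/Real.exp 1) ≤ Real.exp 0.368 := Real.exp_le_exp.mpr hinv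
  have h2 := Real.exp_bound' (show (0:ℝ) ≤ 0.368 by norm_num) (by norm_num)
    (show 0 < 5 by norm_num)
  rw [show (5:ℕ) = 4+1 by rfl] at h2
  simp [Finset.sum_range_succ, Nat.factorial] at h2
  norm_num at h2
  linarith

/-- alternating-sum positivity with exponential weights: for `n ≥ 594`
and `t = ⌈(e^{1/e}-1)·n + 1.05·ln n⌉`,
`Σ_j C(t-1,j)·(-1)^j·(1-e^{-(n+j+1)})/(n+j+1)² ≥ (1-e^{-√n})·Σ_j C(t-1,j)·(-1)^j/(n+j+1)²`. -/
theorem stmt19 (n : ℕ) (hn : 594 ≤ n)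
    (t : ℕ) (ht : t = ⌈(Real.exp (1 / Real.exp 1) - 1) * (n : ℝ) + 1.05 * Real.log (n : ℝ)⌉₊) :
    (1 - Real.exp (-Real.sqrt (n : ℝ))) *
        ∑ j ∈ Finset.range t, ((t - 1).choose j : ℝ) * (-1) ^ j / ((n : ℝ) + j + 1) ^ 2
      ≤ ∑ j ∈ Finset.range t, ((t - 1).choose j : ℝ) * (-1) ^ j *
          (1 - Real.exp (-((n : ℝ) + j + 1))) / ((n : ℝ) + j + 1) ^ 2 := by
  have hnR : (594:ℝ) ≤ n := by exact_mod_cast hn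
  have hx0 : 0 < (Real.exp (1/Real.exp 1) - 1) * (n:ℝ) + 1.05 * Real.log (n:ℝ) := by
    have h1 : (0:ℝ) < 1/Real.exp 1 := by positivity
    have h2 := Real.add_one_le_exp (1/Real.exp 1)
    have h3 : (0:ℝ) ≤ Real.log (n:ℝ) := Real.log_nonneg (by linarith)
    nlinarith
  have ht1 : 1 ≤ t := by rw [ht]; exact Nat.one_le_ceil_iff.mpr hx0
  obtain ⟨m, rfl⟩ : ∃ m, t = m + 1 := ⟨t - 1, by omega⟩
  simp only [Nat.add_sub_cancel]
  have hm : (m:ℝ) ≤ (44491/100000)*n + 1.05*Real.log (n:ℝ) := by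
    have htlt : ((m+1:ℕ):ℝ) < ((Real.exp (1/Real.exp 1) - 1) * n + 1.05*Real.log (n:ℝ)) + 1 := by
      rw [ht]; exact Nat.ceil_lt_add_one hx0.le
    have hb := hexp19
    have h2 : (Real.exp (1/Real.exp 1) - 1) * (n:ℝ) ≤ (44491/100000)*n := by nlinarith
    push_cast at htlt
    linarith
  have hsum2 : ∑ j ∈ Finset.range (m+1),
        (m.choose j:ℝ)*(-1)^j*(1 - Real.exp (-((n:ℝ)+j+1)))/((n:ℝ)+j+1)^2
      = (∑ j ∈ Finset.range (m+1), (m.choose j:ℝ)*(-1)^j/((n:ℝ)+j+1)^2)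
        - Real.exp (-((n:ℝ)+1)) *
          ∑ j ∈ Finset.range (m+1), (m.choose j:ℝ) * (-Real.exp (-1))^j / ((n:ℝ)+j+1)^2 := by
    rw [Finset.mul_sum, ← Finset.sum_sub_distrib]
    refine Finset.sum_congr rfl fun j hj => ?_
    have hexpand : Real.exp (-((n:ℝ)+j+1)) = Real.exp (-((n:ℝ)+1)) * (Real.exp (-1))^j := by
      rw [← Real.exp_nat_mul, ← Real.exp_add]
      congr 1
      ring
    rw [hexpand, neg_pow]
    ring
  rw [hsum2]
  have hS := repr19 n m 1
  have hE := repr19 n m (Real.exp (-1))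
  rw [← hS, ← hE]
  have hkey : Real.exp (-((n:ℝ)+1)) *
      (∫ y in (0:ℝ)..1, ∫ x in (0:ℝ)..1, (x*y)^n * (1 - Real.exp (-1)*(x*y))^m)
      ≤ Real.exp (-Real.sqrt (n:ℝ)) *
      (∫ y in (0:ℝ)..1, ∫ x in (0:ℝ)..1, (x*y)^n * (1 - 1*(x*y))^m) := by
    calc Real.exp (-((n:ℝ)+1)) *
        (∫ y in (0:ℝ)..1, ∫ x in (0:ℝ)..1, (x*y)^n * (1 - Real.exp (-1)*(x*y))^m)
        ≤ Real.exp (-((n:ℝ)+1)) * (1/((n:ℝ)+1)^2) :=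
          mul_le_mul_of_nonneg_left (EI_le19 n m) (Real.exp_pos _).le
      _ ≤ (Real.exp (-Real.sqrt (n:ℝ)) * ((31/100:ℝ)^m * (69/100)^(n+1))) * (1/((n:ℝ)+1)^2) :=
          mul_le_mul_of_nonneg_right (numeric19 n m hn hm) (by positivity)
      _ = Real.exp (-Real.sqrt (n:ℝ)) * ((31/100:ℝ)^m * (69/100)^(n+1) / ((n:ℝ)+1)^2) := by
          ring
      _ ≤ Real.exp (-Real.sqrt (n:ℝ)) *
          (∫ y in (0:ℝ)..1, ∫ x in (0:ℝ)..1, (x*y)^n * (1 - 1*(x*y))^m) :=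
          mul_le_mul_of_nonneg_left (SI_ge19 n m) (Real.exp_pos _).le
  nlinarith [hkey]
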